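/- Let d ≥ 1, let U ⊆ ℝ^d be open, and let E be a bounded connected component of ℝ^d \ U. Then there exists n ∈ ℕ such that the connected component of the set {y ∈ ℝ^d : dist(y, ℝ^d \ U) ≤ 1/n} that contains E is bounded. Here dist(y, S) = inf_{s ∈ S} |y − s| denotes Euclidean distance. -/

import Mathlib

open Metric Set Bornology

/-- Let `d ≥ 1`, let `U ⊆ ℝ^d` be open and let `E` be a bounded connected component
of `ℝ^d \ U`. Then there exists `n ∈ ℕ`, `n > 0`, such that the connected component of
`{y : dist(y, ℝ^d \ U) ≤ 1/n}` containing `E` is bounded. -/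
theorem exists_bounded_neighbourhood_component {d : ℕ} (hd : 1 ≤ d)
    (U : Set (EuclideanSpace ℝ (Fin d))) (hUopen : IsOpen U)
    (E : Set (EuclideanSpace ℝ (Fin d))) (x₀ : EuclideanSpace ℝ (Fin d))
    (hx₀ : x₀ ∈ Uᶜ) (hE : E = connectedComponentIn Uᶜ x₀)
    (hEbdd : Bornology.IsBounded E) :
    ∃ n : ℕ, 0 < n ∧ ∀ x ∈ E,
      Bornology.IsBounded
        (connectedComponentIn {y | Metric.infDist y Uᶜ ≤ 1 / (n : ℝ)} x) := by
  classical
  set F := Uᶜ with hF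
  have hFclosed : IsClosed F := hUopen.isClosed_compl
  have hFne : F.Nonempty := ⟨x₀, hx₀⟩
  have hEx₀ : x₀ ∈ E := hE ▸ mem_connectedComponentIn hx₀
  have hEF : E ⊆ F := hE ▸ connectedComponentIn_subset F x₀
  have hEpre : IsPreconnected E := hE ▸ isPreconnected_connectedComponentIn
  obtain ⟨R, hR0, hER⟩ := hEbdd.subset_ball_lt 0 0
  set K := F ∩ closedBall (0 : EuclideanSpace ℝ (Fin d)) R with hK
  have hKclosed : IsClosed K := hFclosed.inter isClosed_closedBall
  have hKcomp : IsCompact K :=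
    (isCompact_closedBall (0 : EuclideanSpace ℝ (Fin d)) R).of_isClosed_subset hKclosed
      inter_subset_right
  have hx₀K : x₀ ∈ K := ⟨hx₀, ball_subset_closedBall (hER hEx₀)⟩
  have hEK : E ⊆ K := fun y hy => ⟨hEF hy, ball_subset_closedBall (hER hy)⟩
  have hEK' : E = connectedComponentIn K x₀ := by
    apply Subset.antisymm
    · exact hEpre.subset_connectedComponentIn hEx₀ hEK
    · calc connectedComponentIn K x₀ ⊆ connectedComponentIn F x₀ :=
            connectedComponentIn_mono x₀ inter_subset_left
        _ = E := hE.symm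
  haveI : CompactSpace K := isCompact_iff_compactSpace.mp hKcomp
  set x₁ : K := ⟨x₀, hx₀K⟩ with hx₁
  have hcc : connectedComponent x₁ = ⋂ s : { s : Set K // IsClopen s ∧ x₁ ∈ s }, ↑s :=
    connectedComponent_eq_iInter_isClopen x₁
  have himg : E = Subtype.val '' connectedComponent x₁ := by
    rw [hEK', connectedComponentIn_eq_image hx₀K]
  set T : Set K := Subtype.val ⁻¹' sphere (0 : EuclideanSpace ℝ (Fin d)) R with hT
  have hTclosed : IsClosed T := isClosed_sphere.preimage continuous_subtype_val
  have hTcomp : IsCompact T := hTclosed.isCompact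
  have hdisj : ∀ z, z ∈ connectedComponent x₁ → z ∉ T := by
    intro z hz1 hz2
    have hzE : (z : EuclideanSpace ℝ (Fin d)) ∈ E := himg ▸ mem_image_of_mem _ hz1
    have h1 : dist (z : EuclideanSpace ℝ (Fin d)) 0 < R := mem_ball.mp (hER hzE)
    have h2 : dist (z : EuclideanSpace ℝ (Fin d)) 0 = R := mem_sphere.mp hz2
    exact absurd h2 (ne_of_lt h1)
  have hcover : T ⊆ ⋃ s : { s : Set K // IsClopen s ∧ x₁ ∈ s }, (↑s)ᶜ := by
    intro z hz
    by_contra h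
    simp only [mem_iUnion, mem_compl_iff, not_exists, not_not] at h
    exact hdisj z (hcc ▸ mem_iInter.mpr h) hz
  obtain ⟨t, ht⟩ := hTcomp.elim_finite_subcover _ (fun s => s.2.1.1.isOpen_compl) hcover
  set C1 : Set K := ⋂ s ∈ t, (s : Set K) with hC1
  have hC1clopen : IsClopen C1 := isClopen_biInter_finset fun s _ => s.2.1
  have hx₁C1 : x₁ ∈ C1 := mem_iInter₂.mpr fun s _ => s.2.2
  have hccC1 : connectedComponent x₁ ⊆ C1 := by
    rw [hcc]
    exact fun z hz => mem_iInter₂.mpr fun s _ => mem_iInter.mp hz s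
  have hC1T : ∀ z ∈ C1, z ∉ T := by
    intro z h1 h2
    obtain ⟨s, hs, hzs⟩ := mem_iUnion₂.mp (ht h2)
    exact hzs (mem_iInter₂.mp h1 s hs)
  set C : Set (EuclideanSpace ℝ (Fin d)) := Subtype.val '' C1 with hC
  have hCcomp : IsCompact C :=
    (hC1clopen.isClosed.isCompact).image continuous_subtype_val
  have hCne : C.Nonempty := ⟨x₀, mem_image_of_mem _ hx₁C1⟩
  have hEC : E ⊆ C := himg ▸ image_mono hccC1
  have hCK : C ⊆ K := by rintro _ ⟨z, _, rfl⟩; exact z.2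
  have hCsphere : ∀ y ∈ C, y ∉ sphere (0 : EuclideanSpace ℝ (Fin d)) R := by
    rintro _ ⟨z, hz, rfl⟩ hy
    exact hC1T z hz hy
  have hKCclosed : IsClosed (K \ C) := by
    have heq : K \ C = Subtype.val '' (C1ᶜ) := by
      ext y
      constructor
      · rintro ⟨hyK, hyC⟩
        exact ⟨⟨y, hyK⟩, fun h => hyC (mem_image_of_mem _ h), rfl⟩
      · rintro ⟨z, hz, rfl⟩
        refine ⟨z.2, ?_⟩
        rintro ⟨w, hw, hww⟩
        exact hz (by rwa [Subtype.val_injective hww] at hw)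
    rw [heq]
    exact ((hC1clopen.isOpen.isClosed_compl.isCompact).image continuous_subtype_val).isClosed
  set D := (K \ C) ∪ sphere (0 : EuclideanSpace ℝ (Fin d)) R with hD
  have hDclosed : IsClosed D := hKCclosed.union isClosed_sphere
  have hCD : Disjoint C D := by
    rw [disjoint_union_right]
    constructor
    · exact disjoint_left.mpr fun y hy hy' => hy'.2 hy
    · exact disjoint_left.mpr fun y hy hs => hCsphere y hy hs
  obtain ⟨δ, hδ0, hthick⟩ := hCD.exists_thickenings hCcomp hDclosed
  obtain ⟨n, hn⟩ := exists_nat_one_div_lt (show (0 : ℝ) < δ / 2 by linarith)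
  refine ⟨n + 1, Nat.succ_pos n, ?_⟩
  have hεlt : 1 / ((n + 1 : ℕ) : ℝ) < δ / 2 := by push_cast; exact hn
  have hε0 : (0 : ℝ) ≤ 1 / ((n + 1 : ℕ) : ℝ) := by positivity
  set ε : ℝ := 1 / ((n + 1 : ℕ) : ℝ) with hεdef
  set N := {y : EuclideanSpace ℝ (Fin d) | infDist y F ≤ ε} with hN
  have key : ∀ y, infDist y F ≤ ε → infDist y C ≤ δ / 2 → infDist y C ≤ ε := by
    intro y hyF hyC
    obtain ⟨f, hfF, hfd⟩ := hFclosed.exists_infDist_eq_dist hFne y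
    have hdyf : dist y f ≤ ε := hfd ▸ hyF
    have hfC : infDist f C < δ := by
      have h1 : infDist f C ≤ infDist y C + dist f y := infDist_le_infDist_add_dist
      have h2 : dist f y = dist y f := dist_comm f y
      linarith
    have hfthC : f ∈ thickening δ C := (mem_thickening_iff_infDist_lt hCne).mpr hfC
    have hfnD : f ∉ D := fun hfD =>
      (hthick.le_bot ⟨hfthC, self_subset_thickening hδ0 D hfD⟩)
    have hfmem : f ∈ C := by
      by_contra hfc
      have hfball : f ∈ closedBall (0 : EuclideanSpace ℝ (Fin d)) R := by
        by_contra hfb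
        obtain ⟨c, hcC, hcd⟩ := hCcomp.exists_infDist_eq_dist hCne f
        have hcR : dist c 0 ≤ R := mem_closedBall.mp (hCK hcC).2
        have hfR : R < dist f 0 := lt_of_not_ge (fun h => hfb (mem_closedBall.mpr h))
        have hcont : ContinuousOn (fun s : ℝ => dist (c + s • (f - c)) 0) (Icc 0 1) := by
          fun_prop
        have hmem : R ∈ Icc (dist (c + (0:ℝ) • (f - c)) 0) (dist (c + (1:ℝ) • (f - c)) 0) := by
          simp only [zero_smul, add_zero, one_smul, add_sub_cancel]
          exact ⟨hcR, hfR.le⟩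
        obtain ⟨s, hsI, hsR⟩ := intermediate_value_Icc zero_le_one hcont hmem
        set p := c + s • (f - c) with hp
        have hpc : dist p c ≤ dist f c := by
          have : p - c = s • (f - c) := by simp [hp, add_sub_cancel_left]
          rw [dist_eq_norm, this, norm_smul, dist_eq_norm]
          have hfc0 : (0:ℝ) ≤ ‖f - c‖ := norm_nonneg _
          calc ‖s‖ * ‖f - c‖ ≤ 1 * ‖f - c‖ := by
                apply mul_le_mul_of_nonneg_right _ hfc0
                rw [Real.norm_eq_abs, abs_of_nonneg hsI.1]; exact hsI.2
            _ = ‖f - c‖ := one_mul _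
        have hpC : p ∈ thickening δ C := by
          rw [mem_thickening_iff_infDist_lt hCne]
          calc infDist p C ≤ dist p c := infDist_le_dist_of_mem hcC
            _ ≤ dist f c := hpc
            _ = infDist f C := by rw [hcd]
            _ < δ := hfC
        have hpD : p ∈ D := Or.inr (mem_sphere.mpr hsR)
        exact hthick.le_bot ⟨hpC, self_subset_thickening hδ0 D hpD⟩
      exact hfnD (Or.inl ⟨⟨hfF, hfball⟩, hfc⟩)
    calc infDist y C ≤ dist y f := infDist_le_dist_of_mem hfmem
      _ ≤ ε := hdyf
  intro x hx
  set V := {y : EuclideanSpace ℝ (Fin d) | infDist y C < δ / 2} with hV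
  set W := {y : EuclideanSpace ℝ (Fin d) | δ / 2 < infDist y C} with hW
  have hVopen : IsOpen V := isOpen_lt (continuous_infDist_pt C) continuous_const
  have hWopen : IsOpen W := isOpen_lt continuous_const (continuous_infDist_pt C)
  have hVW : Disjoint V W := by
    rw [disjoint_left]
    intro y h1 h2
    simp only [hV, hW, mem_setOf_eq] at h1 h2
    linarith
  have hNsub : N ⊆ V ∪ W := by
    intro y hy
    rcases le_or_gt (infDist y C) (δ / 2) with h | h
    · exact Or.inl (lt_of_le_of_lt (key y hy h) hεlt)
    · exact Or.inr h
  have hxN : x ∈ N := by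
    show infDist x F ≤ ε
    rw [infDist_zero_of_mem (hEF hx)]
    exact hε0
  have hxV : x ∈ V := by
    show infDist x C < δ / 2
    rw [infDist_zero_of_mem (hEC hx)]
    linarith
  have hsub : connectedComponentIn N x ⊆ V :=
    isPreconnected_connectedComponentIn.subset_left_of_subset_union hVopen hWopen hVW
      ((connectedComponentIn_subset N x).trans hNsub)
      ⟨x, mem_connectedComponentIn hxN, hxV⟩
  have hVbdd : IsBounded V := by
    have : V ⊆ closedBall (0 : EuclideanSpace ℝ (Fin d)) (R + δ / 2) := by
      intro y hy
      obtain ⟨c, hcC, hcd⟩ := hCcomp.exists_infDist_eq_dist hCne y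
      have h1 : dist y c < δ / 2 := hcd ▸ hy
      have h2 : dist c 0 ≤ R := mem_closedBall.mp (hCK hcC).2
      rw [mem_closedBall]
      calc dist y 0 ≤ dist y c + dist c 0 := dist_triangle _ _ _
        _ ≤ R + δ / 2 := by linarith
    exact (isBounded_closedBall).subset this
  exact hVbdd.subset hsub
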